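/- For the Kantorovich operators K_n and all f, g ∈ C[0,1], n ≥ 1, the non-multiplicativity is bounded by ‖K_n(fg) − K_n f · K_n g‖_∞ ≤ (1/4) ω̃(f; 2/√(2(n+1))) · ω̃(g; 2/√(2(n+1))). -/

import Mathlib

open MeasureTheory Set

noncomputable def kantorovich (n : ℕ) (f : ℝ → ℝ) (x : ℝ) : ℝ :=
  ((n : ℝ) + 1) * ∑ k ∈ Finset.range (n + 1),
    (n.choose k : ℝ) * x ^ k * (1 - x) ^ (n - k) *
      ∫ t in ((k : ℝ) / ((n : ℝ) + 1))..(((k : ℝ) + 1) / ((n : ℝ) + 1)), f t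

noncomputable def supNorm (f : ℝ → ℝ) : ℝ :=
  sSup {y | ∃ x ∈ Icc (0:ℝ) 1, y = |f x|}

noncomputable def omega1 (f : ℝ → ℝ) (h : ℝ) : ℝ :=
  sSup {d | ∃ s ∈ Icc (0:ℝ) 1, ∃ t ∈ Icc (0:ℝ) 1, |s - t| ≤ h ∧ d = |f s - f t|}

noncomputable def omega2 (f : ℝ → ℝ) (h : ℝ) : ℝ :=
  sSup {d | ∃ t δ : ℝ, 0 < δ ∧ δ ≤ h ∧ t - δ ∈ Icc (0:ℝ) 1 ∧ t + δ ∈ Icc (0:ℝ) 1 ∧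
    d = |f (t + δ) - 2 * f t + f (t - δ)|}

noncomputable def omegaTilde (f : ℝ → ℝ) (t : ℝ) : ℝ :=
  sSup {d | ∃ x y : ℝ, 0 ≤ x ∧ x ≤ t ∧ t ≤ y ∧ y ≤ 1 ∧ x ≠ y ∧
    d = ((t - x) * omega1 f y + (y - t) * omega1 f x) / (y - x)}

namespace KG

lemma hN (n : ℕ) : (0:ℝ) < (n:ℝ) + 1 := by positivity

lemma ab_le (n k : ℕ) : (k:ℝ)/((n:ℝ)+1) ≤ ((k:ℝ)+1)/((n:ℝ)+1) :=
  (div_le_div_iff_of_pos_right (hN n)).mpr (by linarith)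

lemma subInt {n k : ℕ} (hk : k ∈ Finset.range (n+1)) :
    Icc ((k:ℝ)/((n:ℝ)+1)) (((k:ℝ)+1)/((n:ℝ)+1)) ⊆ Icc (0:ℝ) 1 := by
  have hk' : (k:ℝ) + 1 ≤ (n:ℝ) + 1 := by
    have h := Finset.mem_range.mp hk
    have : (k:ℝ) ≤ (n:ℝ) := by exact_mod_cast Nat.lt_succ_iff.mp h
    linarith
  apply Icc_subset_Icc
  · positivity
  · rw [div_le_one (hN n)]; linarith

lemma intInt {n k : ℕ} (hk : k ∈ Finset.range (n+1)) {φ : ℝ → ℝ}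
    (hφ : ContinuousOn φ (Icc (0:ℝ) 1)) :
    IntervalIntegrable φ volume ((k:ℝ)/((n:ℝ)+1)) (((k:ℝ)+1)/((n:ℝ)+1)) := by
  apply ContinuousOn.intervalIntegrable
  rw [uIcc_of_le (ab_le n k)]
  exact hφ.mono (subInt hk)

lemma bpos {n k : ℕ} {z : ℝ} (hz : z ∈ Icc (0:ℝ) 1) :
    0 ≤ (n.choose k : ℝ) * z ^ k * (1 - z) ^ (n - k) := by
  obtain ⟨h0, h1⟩ := hz
  have : 0 ≤ 1 - z := by linarith
  positivity

lemma kan_add (n : ℕ) (z : ℝ) {φ ψ : ℝ → ℝ} (hφ : ContinuousOn φ (Icc (0:ℝ) 1))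
    (hψ : ContinuousOn ψ (Icc (0:ℝ) 1)) :
    kantorovich n (fun t => φ t + ψ t) z = kantorovich n φ z + kantorovich n ψ z := by
  unfold kantorovich
  rw [← mul_add, ← Finset.sum_add_distrib]
  congr 1
  apply Finset.sum_congr rfl
  intro k hk
  rw [intervalIntegral.integral_add (intInt hk hφ) (intInt hk hψ)]
  ring

lemma kan_smul (n : ℕ) (z : ℝ) (c : ℝ) (φ : ℝ → ℝ) :
    kantorovich n (fun t => c * φ t) z = c * kantorovich n φ z := by
  unfold kantorovich
  have h : ∀ k ∈ Finset.range (n+1),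
      (n.choose k : ℝ) * z ^ k * (1 - z) ^ (n - k) *
        ∫ t in ((k:ℝ)/((n:ℝ)+1))..(((k:ℝ)+1)/((n:ℝ)+1)), c * φ t
      = c * ((n.choose k : ℝ) * z ^ k * (1 - z) ^ (n - k) *
        ∫ t in ((k:ℝ)/((n:ℝ)+1))..(((k:ℝ)+1)/((n:ℝ)+1)), φ t) := by
    intro k hk
    rw [intervalIntegral.integral_const_mul]
    ring
  rw [Finset.sum_congr rfl h, ← Finset.mul_sum]
  ring

lemma sumB (n : ℕ) (z : ℝ) :
    ∑ k ∈ Finset.range (n+1), (n.choose k : ℝ) * z^k * (1-z)^(n-k) = 1 := by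
  have := congrArg (Polynomial.eval z) (bernsteinPolynomial.sum ℝ n)
  simpa [bernsteinPolynomial, Polynomial.eval_finset_sum] using this

lemma kan_const (n : ℕ) (z : ℝ) (c : ℝ) :
    kantorovich n (fun _ => c) z = c := by
  unfold kantorovich
  have : ∀ k ∈ Finset.range (n+1),
      (n.choose k : ℝ) * z ^ k * (1 - z) ^ (n - k) *
        ∫ t in ((k:ℝ)/((n:ℝ)+1))..(((k:ℝ)+1)/((n:ℝ)+1)), c
      = ((n.choose k : ℝ) * z ^ k * (1 - z) ^ (n - k)) * (c / ((n:ℝ)+1)) := by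
    intro k hk
    rw [intervalIntegral.integral_const]
    have : ((k:ℝ)+1)/((n:ℝ)+1) - (k:ℝ)/((n:ℝ)+1) = 1/((n:ℝ)+1) := by
      field_simp
      ring
    rw [this, smul_eq_mul]
    ring
  rw [Finset.sum_congr rfl this, ← Finset.sum_mul, sumB]
  field_simp

lemma kan_nonneg (n : ℕ) {z : ℝ} (hz : z ∈ Icc (0:ℝ) 1) {φ : ℝ → ℝ}
    (hφ0 : ∀ t ∈ Icc (0:ℝ) 1, 0 ≤ φ t) :
    0 ≤ kantorovich n φ z := by
  unfold kantorovich
  apply mul_nonneg (le_of_lt (hN n))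
  apply Finset.sum_nonneg
  intro k hk
  apply mul_nonneg (bpos hz)
  apply intervalIntegral.integral_nonneg (ab_le n k)
  intro u hu
  exact hφ0 u (subInt hk hu)

lemma kan_sub (n : ℕ) (z : ℝ) {φ ψ : ℝ → ℝ} (hφ : ContinuousOn φ (Icc (0:ℝ) 1))
    (hψ : ContinuousOn ψ (Icc (0:ℝ) 1)) :
    kantorovich n (fun t => φ t - ψ t) z = kantorovich n φ z - kantorovich n ψ z := by
  have h1 : ContinuousOn (fun t => (-1:ℝ) * ψ t) (Icc (0:ℝ) 1) := hψ.const_smul (-1:ℝ)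
  have := kan_add n z hφ h1
  simp only [sub_eq_add_neg]
  rw [show (fun t => φ t + -ψ t) = (fun t => φ t + (-1:ℝ) * ψ t) by ext t; ring, this,
    kan_smul]
  ring

lemma kan_mono (n : ℕ) {z : ℝ} (hz : z ∈ Icc (0:ℝ) 1) {φ ψ : ℝ → ℝ}
    (hφ : ContinuousOn φ (Icc (0:ℝ) 1)) (hψ : ContinuousOn ψ (Icc (0:ℝ) 1))
    (hle : ∀ t ∈ Icc (0:ℝ) 1, φ t ≤ ψ t) :
    kantorovich n φ z ≤ kantorovich n ψ z := by
  have h0 : 0 ≤ kantorovich n (fun t => ψ t - φ t) z :=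
    kan_nonneg n hz (fun t ht => by linarith [hle t ht])
  rw [kan_sub n z hψ hφ] at h0
  linarith

end KG

namespace KG

lemma sumKB (n : ℕ) (z : ℝ) :
    ∑ k ∈ Finset.range (n+1), (k:ℝ) * ((n.choose k : ℝ) * z^k * (1-z)^(n-k)) = (n:ℝ)*z := by
  have := congrArg (Polynomial.eval z) (bernsteinPolynomial.sum_smul ℝ n)
  simpa [bernsteinPolynomial, Polynomial.eval_finset_sum] using this

lemma sumVar (n : ℕ) (z : ℝ) :
    ∑ k ∈ Finset.range (n+1), ((n:ℝ)*z - k)^2 * ((n.choose k : ℝ) * z^k * (1-z)^(n-k))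
      = (n:ℝ)*z*(1-z) := by
  have := congrArg (Polynomial.eval z) (bernsteinPolynomial.variance ℝ n)
  simpa [bernsteinPolynomial, Polynomial.eval_finset_sum] using this

lemma momInt (n k : ℕ) (z : ℝ) :
    ∫ t in ((k:ℝ)/((n:ℝ)+1))..(((k:ℝ)+1)/((n:ℝ)+1)), (t - z)^2
      = (((k:ℝ) - ((n:ℝ)+1)*z + 1/2)^2 + 1/12) / ((n:ℝ)+1)^3 := by
  rw [intervalIntegral.integral_comp_sub_right (fun x => x^2) z, integral_pow]
  have h : ((n:ℝ)+1) ≠ 0 := by positivity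
  field_simp
  ring_nf
  field_simp
  ring

end KG

namespace KG
lemma kan_moment (n : ℕ) (hn : 1 ≤ n) {z : ℝ} (hz : z ∈ Icc (0:ℝ) 1) :
    kantorovich n (fun t => (t - z)^2) z ≤ 1 / (2*((n:ℝ)+1)) := by
  obtain ⟨hz0, hz1⟩ := hz
  have hn1 : (1:ℝ) ≤ (n:ℝ) := by exact_mod_cast hn
  have hNpos : (0:ℝ) < (n:ℝ)+1 := by positivity
  have key : kantorovich n (fun t => (t - z)^2) z
      = ((n:ℝ)*z*(1-z) + (1/2 - z)^2 + 1/12) / ((n:ℝ)+1)^2 := by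
    unfold kantorovich
    have h1 : ∀ k ∈ Finset.range (n+1),
        (n.choose k : ℝ) * z ^ k * (1 - z) ^ (n - k) *
          ∫ t in ((k:ℝ)/((n:ℝ)+1))..(((k:ℝ)+1)/((n:ℝ)+1)), (t - z)^2
        = (((n:ℝ)*z - k)^2 * ((n.choose k : ℝ) * z^k * (1-z)^(n-k))
            + (1 - 2*z) * ((k:ℝ) * ((n.choose k : ℝ) * z^k * (1-z)^(n-k)))
            + ((1/2 - z)^2 + 1/12 - (n:ℝ)*z*(1-2*z))
                * ((n.choose k : ℝ) * z^k * (1-z)^(n-k))) / ((n:ℝ)+1)^3 := by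
      intro k hk
      rw [momInt]
      ring
    rw [Finset.sum_congr rfl h1, ← Finset.sum_div, Finset.sum_add_distrib,
      Finset.sum_add_distrib, ← Finset.mul_sum, ← Finset.mul_sum,
      sumVar, sumKB, sumB]
    field_simp
    ring
  rw [key, div_le_div_iff₀ (by positivity) (by positivity)]
  nlinarith [sq_nonneg (2*z - 1), mul_nonneg (mul_nonneg (sub_nonneg.mpr hn1) hz0) (sub_nonneg.mpr hz1)]
end KG

namespace KG

variable {f : ℝ → ℝ} {M : ℝ}

def Bnd (f : ℝ → ℝ) (M : ℝ) : Prop := 0 ≤ M ∧ ∀ x ∈ Icc (0:ℝ) 1, |f x| ≤ M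

lemma o1_nonneg (f : ℝ → ℝ) (h : ℝ) : 0 ≤ omega1 f h := by
  apply Real.sSup_nonneg
  rintro d ⟨s, _, t, _, _, rfl⟩
  exact abs_nonneg _

lemma o1_le (hM : Bnd f M) (h : ℝ) : omega1 f h ≤ 2 * M := by
  apply Real.sSup_le ?_ (by linarith [hM.1])
  rintro d ⟨s, hs, t, ht, _, rfl⟩
  calc |f s - f t| ≤ |f s| + |f t| := abs_sub _ _
    _ ≤ 2 * M := by linarith [hM.2 s hs, hM.2 t ht]

lemma o1_bddAbove (hM : Bnd f M) (h : ℝ) :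
    BddAbove {d | ∃ s ∈ Icc (0:ℝ) 1, ∃ t ∈ Icc (0:ℝ) 1, |s - t| ≤ h ∧ d = |f s - f t|} := by
  refine ⟨2 * M, ?_⟩
  rintro d ⟨s, hs, t, ht, _, rfl⟩
  calc |f s - f t| ≤ |f s| + |f t| := abs_sub _ _
    _ ≤ 2 * M := by linarith [hM.2 s hs, hM.2 t ht]

lemma o1_ge (hM : Bnd f M) {h s t : ℝ} (hs : s ∈ Icc (0:ℝ) 1) (ht : t ∈ Icc (0:ℝ) 1)
    (hst : |s - t| ≤ h) : |f s - f t| ≤ omega1 f h :=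
  le_csSup (o1_bddAbove hM h) ⟨s, hs, t, ht, hst, rfl⟩

lemma o1_mono (hM : Bnd f M) {h h' : ℝ} (hh : h ≤ h') : omega1 f h ≤ omega1 f h' := by
  apply Real.sSup_le ?_ (o1_nonneg f h')
  rintro d ⟨s, hs, t, ht, hst, rfl⟩
  exact o1_ge hM hs ht (le_trans hst hh)

lemma o1_zero (hM : Bnd f M) : omega1 f 0 = 0 := by
  apply le_antisymm
  · apply Real.sSup_le ?_ le_rfl
    rintro d ⟨s, _, t, _, hst, rfl⟩
    have : s = t := by
      have := abs_nonneg (s - t)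
      have : |s - t| = 0 := le_antisymm hst this
      have := abs_eq_zero.mp this
      linarith
    simp [this]
  · exact o1_nonneg f 0

lemma ot_bddAbove (hM : Bnd f M) (τ : ℝ) :
    BddAbove {d | ∃ x y : ℝ, 0 ≤ x ∧ x ≤ τ ∧ τ ≤ y ∧ y ≤ 1 ∧ x ≠ y ∧
      d = ((τ - x) * omega1 f y + (y - τ) * omega1 f x) / (y - x)} := by
  refine ⟨2 * M, ?_⟩
  rintro d ⟨x, y, hx0, hxτ, hτy, hy1, hxy, rfl⟩
  have hxy' : x < y := lt_of_le_of_ne (le_trans hxτ hτy) hxy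
  rw [div_le_iff₀ (by linarith)]
  have h1 := o1_le hM y
  have h2 := o1_le hM x
  have h3 := o1_nonneg f y
  have h4 := o1_nonneg f x
  nlinarith [o1_nonneg f y, o1_nonneg f x]

lemma chord_le (hM : Bnd f M) {τ x y : ℝ} (hx0 : 0 ≤ x) (hxτ : x ≤ τ) (hτy : τ ≤ y)
    (hy1 : y ≤ 1) (hxy : x ≠ y) :
    ((τ - x) * omega1 f y + (y - τ) * omega1 f x) / (y - x) ≤ omegaTilde f τ :=
  le_csSup (ot_bddAbove hM τ) ⟨x, y, hx0, hxτ, hτy, hy1, hxy, rfl⟩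

lemma ot_nonneg (hM : Bnd f M) {τ : ℝ} (hτ0 : 0 < τ) (hτ1 : τ ≤ 1) :
    0 ≤ omegaTilde f τ := by
  have := chord_le hM (le_refl 0) (le_of_lt hτ0) hτ1 le_rfl (by linarith [hτ0] : (0:ℝ) ≠ 1)
  -- chord with x=0,y=1
  refine le_trans ?_ this
  have h3 := o1_nonneg f 1
  have h4 := o1_nonneg f 0
  have : 0 ≤ (τ - 0) * omega1 f 1 + (1 - τ) * omega1 f 0 := by nlinarith
  positivity

lemma o1_le_ot (hM : Bnd f M) {τ : ℝ} (hτ0 : 0 < τ) (hτ1 : τ ≤ 1) :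
    omega1 f τ ≤ omegaTilde f τ := by
  rcases lt_or_eq_of_le hτ1 with h | h
  · have := chord_le hM (le_of_lt hτ0) le_rfl (le_of_lt h) le_rfl (ne_of_lt h)
    calc omega1 f τ = ((τ - τ) * omega1 f 1 + (1 - τ) * omega1 f τ) / (1 - τ) := by
          rw [sub_self, zero_mul, zero_add, mul_comm, mul_div_assoc, div_self (by linarith : (1:ℝ)-τ ≠ 0), mul_one]
      _ ≤ omegaTilde f τ := this
  · subst h
    have := chord_le hM le_rfl zero_le_one le_rfl le_rfl (by norm_num : (0:ℝ) ≠ 1)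
    calc omega1 f 1 = ((1 - 0) * omega1 f 1 + (1 - 1) * omega1 f 0) / (1 - 0) := by
          field_simp
          ring
      _ ≤ omegaTilde f 1 := this

-- scaled bound: omega1 f y ≤ (y/τ) * omegaTilde f τ for τ ≤ y
lemma o1_scaled (hM : Bnd f M) {τ y : ℝ} (hτ0 : 0 < τ) (hτy : τ ≤ y) (hy1 : y ≤ 1) :
    τ * omega1 f y ≤ y * omegaTilde f τ := by
  have hy0 : 0 < y := lt_of_lt_of_le hτ0 hτy
  have := chord_le hM le_rfl (le_of_lt hτ0) hτy hy1 (ne_of_lt hy0)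
  rw [o1_zero hM] at this
  rw [div_le_iff₀ (by linarith)] at this
  nlinarith [ot_nonneg hM hτ0 (le_trans hτy hy1)]

end KG
namespace KG

lemma envelope (hM : Bnd f M) {α β : ℝ} (hα : 0 ≤ α) (hβ : 0 ≤ β)
    (hmaj : ∀ u ∈ Icc (0:ℝ) 1, omega1 f u ≤ α * u + β) :
    ∃ G : ℝ → ℝ, ContinuousOn G (Icc (0:ℝ) 1) ∧
      (∀ s ∈ Icc (0:ℝ) 1, ∀ t ∈ Icc (0:ℝ) 1, |G s - G t| ≤ α * |s - t|) ∧
      (∀ u ∈ Icc (0:ℝ) 1, |f u - G u| ≤ β / 2) := by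
  set G0 : ℝ → ℝ := fun u => sSup ((fun v => f v - α * |u - v|) '' (Icc (0:ℝ) 1)) with hG0
  have hne : ∀ u : ℝ, ((fun v => f v - α * |u - v|) '' (Icc (0:ℝ) 1)).Nonempty :=
    fun u => ⟨_, ⟨0, ⟨le_rfl, zero_le_one⟩, rfl⟩⟩
  have hbdd : ∀ u : ℝ, BddAbove ((fun v => f v - α * |u - v|) '' (Icc (0:ℝ) 1)) := by
    intro u
    refine ⟨M, ?_⟩
    rintro d ⟨v, hv, rfl⟩
    show f v - α * |u - v| ≤ M
    have h1 := (abs_le.mp (hM.2 v hv)).2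
    have h2 : α * |u - v| ≥ 0 := by positivity
    linarith
  have hlipG0 : ∀ u u' : ℝ, G0 u ≤ G0 u' + α * |u - u'| := by
    intro u u'
    apply csSup_le (hne u)
    rintro d ⟨v, hv, rfl⟩
    show f v - α * |u - v| ≤ G0 u' + α * |u - u'|
    have h1 : f v - α * |u' - v| ≤ G0 u' := le_csSup (hbdd u') ⟨v, hv, rfl⟩
    have h2 : |u' - v| ≤ |u' - u| + |u - v| := abs_sub_le u' u v
    have h3 : α * |u' - v| ≤ α * (|u' - u| + |u - v|) := by
      apply mul_le_mul_of_nonneg_left h2 hα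
    rw [abs_sub_comm u u']
    nlinarith [abs_nonneg (u' - u)]
  have hge : ∀ u ∈ Icc (0:ℝ) 1, f u ≤ G0 u := by
    intro u hu
    have : f u - α * |u - u| ≤ G0 u := le_csSup (hbdd u) ⟨u, hu, rfl⟩
    simpa using this
  have hle : ∀ u ∈ Icc (0:ℝ) 1, G0 u ≤ f u + β := by
    intro u hu
    apply csSup_le (hne u)
    rintro d ⟨v, hv, rfl⟩
    show f v - α * |u - v| ≤ f u + β
    have habs : |u - v| ∈ Icc (0:ℝ) 1 := by
      obtain ⟨ha1, ha2⟩ := hu; obtain ⟨hb1, hb2⟩ := hv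
      constructor
      · exact abs_nonneg _
      · rw [abs_le]; constructor <;> linarith
    have h1 : |f v - f u| ≤ omega1 f |u - v| :=
      o1_ge hM hv hu (le_of_eq (abs_sub_comm v u))
    have h2 := hmaj _ habs
    have := abs_le.mp h1
    linarith [this.1, this.2]
  refine ⟨fun u => G0 u - β / 2, ?_, ?_, ?_⟩
  · have : LipschitzOnWith (Real.toNNReal α) G0 (Icc (0:ℝ) 1) := by
      rw [lipschitzOnWith_iff_dist_le_mul]
      intro x hx y hy
      rw [Real.dist_eq, Real.dist_eq]
      rw [abs_le]
      have h1 := hlipG0 x y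
      have h2 := hlipG0 y x
      rw [abs_sub_comm y x] at h2
      have hcoe : (Real.toNNReal α : ℝ) = α := Real.coe_toNNReal α hα
      rw [hcoe]
      constructor <;> linarith
    exact (this.continuousOn.sub continuousOn_const)
  · intro s hs t ht
    have h1 := hlipG0 s t
    have h2 := hlipG0 t s
    rw [abs_sub_comm t s] at h2
    have : (fun u => G0 u - β / 2) s - (fun u => G0 u - β / 2) t = G0 s - G0 t := by ring
    rw [this, abs_le]
    constructor <;> linarith
  · intro u hu
    have h1 := hge u hu
    have h2 := hle u hu
    simp only
    rw [abs_le]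
    constructor <;> linarith

end KG
namespace KG

lemma affine_majorant (hM : Bnd f M) {τ ε : ℝ} (hτ0 : 0 < τ) (hτ1 : τ ≤ 1) (hε : 0 < ε) :
    ∃ α β : ℝ, 0 ≤ α ∧ 0 ≤ β ∧ (∀ u ∈ Icc (0:ℝ) 1, omega1 f u ≤ α * u + β) ∧
      α * τ + β ≤ omegaTilde f τ + ε := by
  set W := omegaTilde f τ with hW
  have hWnn : 0 ≤ W := ot_nonneg hM hτ0 hτ1
  rcases eq_or_lt_of_le hτ1 with h1 | hτlt
  · -- τ = 1
    refine ⟨0, omega1 f 1, le_rfl, o1_nonneg f 1, ?_, ?_⟩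
    · intro u hu
      rw [zero_mul, zero_add]
      exact o1_mono hM hu.2
    · rw [zero_mul, zero_add, ← h1]
      calc omega1 f τ ≤ W := o1_le_ot hM hτ0 hτ1
        _ ≤ W + ε := by linarith
  · -- τ < 1
    set c := W + ε with hc
    have hcW : W < c := by simp [hc]; linarith
    set S := (fun y => (omega1 f y - c) / (y - τ)) '' (Ioc τ 1) with hS
    have hSne : S.Nonempty := ⟨_, ⟨1, ⟨hτlt, le_rfl⟩, rfl⟩⟩
    have hSbd : ∀ d ∈ S, d ≤ W / τ := by
      rintro d ⟨y, ⟨hy1, hy2⟩, rfl⟩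
      have hyτ : 0 < y - τ := by linarith
      rw [div_le_div_iff₀ hyτ hτ0]
      have := o1_scaled hM hτ0 (le_of_lt hy1) hy2
      nlinarith
    have hSbdd : BddAbove S := ⟨W / τ, hSbd⟩
    set α0 := sSup S with hα0
    set α := max α0 0 with hα
    have hαnn : 0 ≤ α := le_max_right _ _
    -- α bounded by left slopes
    have hleft : ∀ u, 0 ≤ u → u < τ → α * (τ - u) ≤ c - omega1 f u := by
      intro u hu0 huτ
      have huc : omega1 f u ≤ c := by
        calc omega1 f u ≤ omega1 f τ := o1_mono hM (le_of_lt huτ)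
          _ ≤ W := o1_le_ot hM hτ0 hτ1
          _ ≤ c := le_of_lt hcW
      have hslope : α ≤ (c - omega1 f u) / (τ - u) := by
        apply max_le
        · apply csSup_le hSne
          rintro d ⟨y, ⟨hy1, hy2⟩, rfl⟩
          have hyτ : 0 < y - τ := by linarith
          have hτu : 0 < τ - u := by linarith
          rw [div_le_div_iff₀ hyτ hτu]
          have hchord : ((τ - u) * omega1 f y + (y - τ) * omega1 f u) / (y - u) ≤ W :=
            chord_le hM hu0 (le_of_lt huτ) (le_of_lt hy1) hy2 (by intro h; subst h; linarith)
          rw [div_le_iff₀ (by linarith : (0:ℝ) < y - u)] at hchord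
          nlinarith
        · exact div_nonneg (by linarith) (by linarith)
      rw [le_div_iff₀ (by linarith : (0:ℝ) < τ - u)] at hslope
      linarith
    have hβnn : 0 ≤ c - α * τ := by
      have := hleft 0 le_rfl hτ0
      rw [o1_zero hM] at this
      linarith
    refine ⟨α, c - α * τ, hαnn, hβnn, ?_, by linarith⟩
    intro u hu
    rcases lt_trichotomy u τ with h | h | h
    · have := hleft u hu.1 h
      nlinarith
    · subst h
      have : omega1 f u ≤ W := o1_le_ot hM hτ0 hτ1
      linarith
    · -- u > τ
      have huτ : 0 < u - τ := by linarith
      have hmem : (omega1 f u - c) / (u - τ) ∈ S := ⟨u, ⟨h, hu.2⟩, rfl⟩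
      have hle : (omega1 f u - c) / (u - τ) ≤ α0 := le_csSup hSbdd hmem
      have hle2 : (omega1 f u - c) / (u - τ) ≤ α := le_trans hle (le_max_left _ _)
      rw [div_le_iff₀ huτ] at hle2
      nlinarith

end KG

namespace KG

variable {f g : ℝ → ℝ} {M : ℝ}

lemma kan_quad (n : ℕ) (z : ℝ) (a b : ℝ) {φ ψ : ℝ → ℝ}
    (hφ : ContinuousOn φ (Icc (0:ℝ) 1)) (hψ : ContinuousOn ψ (Icc (0:ℝ) 1)) :
    kantorovich n (fun t => (a * φ t + b * ψ t)^2) z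
      = a^2 * kantorovich n (fun t => φ t * φ t) z
        + 2*a*b * kantorovich n (fun t => φ t * ψ t) z
        + b^2 * kantorovich n (fun t => ψ t * ψ t) z := by
  have e : (fun t => (a * φ t + b * ψ t)^2)
      = fun t => a^2 * (φ t * φ t) + ((2*a*b) * (φ t * ψ t) + b^2 * (ψ t * ψ t)) := by
    ext t; ring
  rw [e, kan_add n z (φ := fun t => a^2 * (φ t * φ t))
      (ψ := fun t => (2*a*b) * (φ t * ψ t) + b^2 * (ψ t * ψ t)) (continuousOn_const.mul (hφ.mul hφ))
      ((continuousOn_const.mul (hφ.mul hψ)).add (continuousOn_const.mul (hψ.mul hψ))),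
    kan_add n z (φ := fun t => (2*a*b) * (φ t * ψ t)) (ψ := fun t => b^2 * (ψ t * ψ t))
      (continuousOn_const.mul (hφ.mul hψ)) (continuousOn_const.mul (hψ.mul hψ)),
    kan_smul, kan_smul, kan_smul]
  ring

lemma kan_lin (n : ℕ) (z : ℝ) (a b : ℝ) {φ ψ : ℝ → ℝ}
    (hφ : ContinuousOn φ (Icc (0:ℝ) 1)) (hψ : ContinuousOn ψ (Icc (0:ℝ) 1)) :
    kantorovich n (fun t => a * φ t + b * ψ t) z
      = a * kantorovich n φ z + b * kantorovich n ψ z := by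
  rw [kan_add n z (φ := fun t => a * φ t) (ψ := fun t => b * ψ t) (continuousOn_const.mul hφ) (continuousOn_const.mul hψ), kan_smul, kan_smul]

/-- The variance of φ under the Kantorovich functional at z. -/
noncomputable def kvar (n : ℕ) (z : ℝ) (φ : ℝ → ℝ) : ℝ :=
  kantorovich n (fun t => φ t * φ t) z - (kantorovich n φ z)^2

noncomputable def kcov (n : ℕ) (z : ℝ) (φ ψ : ℝ → ℝ) : ℝ :=
  kantorovich n (fun t => φ t * ψ t) z - kantorovich n φ z * kantorovich n ψ z

lemma kvar_nonneg (n : ℕ) {z : ℝ} (hz : z ∈ Icc (0:ℝ) 1) {φ : ℝ → ℝ}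
    (hφ : ContinuousOn φ (Icc (0:ℝ) 1)) : 0 ≤ kvar n z φ := by
  set c := kantorovich n φ z with hc
  have h1 : ContinuousOn (fun _ : ℝ => (1:ℝ)) (Icc (0:ℝ) 1) := continuousOn_const
  have h0 : 0 ≤ kantorovich n (fun t => (1 * φ t + (-c) * 1)^2) z :=
    kan_nonneg n hz (fun t _ => sq_nonneg _)
  rw [kan_quad n z 1 (-c) hφ h1, kan_const] at h0
  have hφ1 : kantorovich n (fun t => φ t * 1) z = c := by
    rw [show (fun t => φ t * 1) = φ by ext t; ring]
  rw [hφ1] at h0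
  unfold kvar
  nlinarith [h0]

lemma quad_nonneg (n : ℕ) {z : ℝ} (hz : z ∈ Icc (0:ℝ) 1) {φ ψ : ℝ → ℝ}
    (hφ : ContinuousOn φ (Icc (0:ℝ) 1)) (hψ : ContinuousOn ψ (Icc (0:ℝ) 1)) (a b : ℝ) :
    0 ≤ a^2 * kvar n z φ + 2*a*b * kcov n z φ ψ + b^2 * kvar n z ψ := by
  have hθ : ContinuousOn (fun t => a * φ t + b * ψ t) (Icc (0:ℝ) 1) :=
    (continuousOn_const.mul hφ).add (continuousOn_const.mul hψ)
  have h0 := kvar_nonneg n hz hθ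
  unfold kvar at h0
  rw [show (fun t => (a * φ t + b * ψ t) * (a * φ t + b * ψ t))
      = (fun t => (a * φ t + b * ψ t)^2) by ext t; ring] at h0
  rw [kan_quad n z a b hφ hψ, kan_lin n z a b hφ hψ] at h0
  unfold kvar kcov
  nlinarith [h0]

lemma kcs (n : ℕ) {z : ℝ} (hz : z ∈ Icc (0:ℝ) 1) {φ ψ : ℝ → ℝ}
    (hφ : ContinuousOn φ (Icc (0:ℝ) 1)) (hψ : ContinuousOn ψ (Icc (0:ℝ) 1)) :
    (kcov n z φ ψ)^2 ≤ kvar n z φ * kvar n z ψ := by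
  have hC : 0 ≤ kvar n z ψ := kvar_nonneg n hz hψ
  rcases eq_or_lt_of_le hC with h | h
  · have hB : kcov n z φ ψ = 0 := by
      by_contra hB
      have h1 := quad_nonneg n hz hφ hψ 1 (-(kvar n z φ+1)/(2*kcov n z φ ψ))
      rw [← h] at h1
      have he : 2*1*(-(kvar n z φ+1)/(2*kcov n z φ ψ)) * kcov n z φ ψ
          = -(kvar n z φ+1) := by field_simp
      nlinarith [h1]
    rw [hB, ← h]
    simp
  · have h1 := quad_nonneg n hz hφ hψ (kvar n z ψ) (-(kcov n z φ ψ))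
    nlinarith [h1]
end KG

namespace KG

lemma tau_mem (n : ℕ) (hn : 1 ≤ n) :
    0 < 2 * Real.sqrt (1 / (2 * ((n : ℝ) + 1))) ∧
      2 * Real.sqrt (1 / (2 * ((n : ℝ) + 1))) ≤ 1 := by
  have hn1 : (1:ℝ) ≤ (n:ℝ) := by exact_mod_cast hn
  have hpos : (0:ℝ) < 1 / (2 * ((n : ℝ) + 1)) := by positivity
  set m := Real.sqrt (1 / (2 * ((n : ℝ) + 1))) with hm
  have hm0 : 0 ≤ m := Real.sqrt_nonneg _
  have hm2 : m^2 = 1 / (2 * ((n : ℝ) + 1)) := Real.sq_sqrt (le_of_lt hpos)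
  have hmpos : 0 < m := Real.sqrt_pos.mpr hpos
  constructor
  · linarith
  · have h4 : m^2 ≤ 1/4 := by
      rw [hm2]
      rw [div_le_div_iff₀ (by positivity) (by norm_num)]
      linarith
    nlinarith [hm0, h4]

lemma var_le (n : ℕ) (hn : 1 ≤ n) {z : ℝ} (hz : z ∈ Icc (0:ℝ) 1) {f : ℝ → ℝ} {M : ℝ}
    (hM : Bnd f M) (hf : ContinuousOn f (Icc (0:ℝ) 1)) {ε : ℝ} (hε : 0 < ε) :
    kvar n z f ≤ ((omegaTilde f (2 * Real.sqrt (1 / (2 * ((n : ℝ) + 1)))) + ε) / 2)^2 := by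
  have hpos : (0:ℝ) < 1 / (2 * ((n : ℝ) + 1)) := by positivity
  set m := Real.sqrt (1 / (2 * ((n : ℝ) + 1))) with hm
  have hm0 : 0 ≤ m := Real.sqrt_nonneg _
  have hm2 : m^2 = 1 / (2 * ((n : ℝ) + 1)) := Real.sq_sqrt (le_of_lt hpos)
  obtain ⟨hτ0, hτ1⟩ := tau_mem n hn
  rw [← hm] at hτ0 hτ1
  set W := omegaTilde f (2 * m) with hW
  obtain ⟨α, β, hα, hβ, hmaj, hsum⟩ := affine_majorant hM hτ0 hτ1 hε
  obtain ⟨G, hGc, hGlip, hGap⟩ := envelope hM hα hβ hmaj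
  have hφc : ContinuousOn (fun t => f t - G t) (Icc (0:ℝ) 1) := hf.sub hGc
  -- decomposition
  have hdec : kvar n z f = kvar n z (fun t => f t - G t)
      + 2 * kcov n z (fun t => f t - G t) G + kvar n z G := by
    have h1 : kantorovich n (fun t => f t * f t) z
        = kantorovich n (fun t => (1 * (f t - G t) + 1 * G t)^2) z := by
      congr 1; ext t; ring
    have h2 : kantorovich n f z
        = kantorovich n (fun t => 1 * (f t - G t) + 1 * G t) z := by
      congr 1; ext t; ring
    rw [kan_quad n z 1 1 hφc hGc] at h1
    rw [kan_lin n z 1 1 hφc hGc] at h2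
    unfold kvar kcov
    rw [h1, h2]
    ring
  set p := β / 2 with hp
  set q := α * m with hq
  have hp0 : 0 ≤ p := by positivity
  have hq0 : 0 ≤ q := mul_nonneg hα hm0
  -- Var of f - G
  have hVφ : kvar n z (fun t => f t - G t) ≤ p^2 := by
    have hmono : kantorovich n (fun t => (f t - G t) * (f t - G t)) z
        ≤ kantorovich n (fun _ => p^2) z := by
      apply kan_mono n hz (hφc.mul hφc) continuousOn_const
      intro t ht
      have h := abs_le.mp (hGap t ht)
      show (f t - G t) * (f t - G t) ≤ p^2
      nlinarith [h.1, h.2]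
    rw [kan_const] at hmono
    unfold kvar
    nlinarith [sq_nonneg (kantorovich n (fun t => f t - G t) z)]
  -- Var of G
  have hVG : kvar n z G ≤ q^2 := by
    have hcont2 : ContinuousOn (fun t : ℝ => α^2 * (t - z)^2) (Icc (0:ℝ) 1) :=
      (continuous_const.mul ((continuous_id.sub continuous_const).pow 2)).continuousOn
    have hiden : kantorovich n (fun t => (1 * G t + (-(G z)) * 1)^2) z
        = kantorovich n (fun t => G t * G t) z - 2*(G z)*(kantorovich n G z) + (G z)^2 := by
      rw [kan_quad n z 1 (-(G z)) hGc continuousOn_const]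
      have e1 : kantorovich n (fun t => G t * 1) z = kantorovich n G z := by
        congr 1; ext t; ring
      have e2 : kantorovich n (fun t => (1:ℝ) * 1) z = 1 := by
        rw [show (fun t : ℝ => (1:ℝ) * 1) = (fun _ : ℝ => (1:ℝ)) by ext t; ring, kan_const]
      rw [e1, e2]
      ring
    have hmono : kantorovich n (fun t => (1 * G t + (-(G z)) * 1)^2) z
        ≤ kantorovich n (fun t => α^2 * (t - z)^2) z := by
      apply kan_mono n hz
        (((continuousOn_const.mul hGc).add continuousOn_const).pow 2) hcont2
      intro t ht
      have h := hGlip t ht z hz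
      have h2 := mul_self_le_mul_self (abs_nonneg (G t - G z)) h
      rw [abs_mul_abs_self] at h2
      have h3 := abs_mul_abs_self (t - z)
      show (1 * G t + (-(G z)) * 1)^2 ≤ α^2 * (t - z)^2
      nlinarith [h2, h3]
    have hsm : kantorovich n (fun t => α^2 * (t - z)^2) z
        = α^2 * kantorovich n (fun t => (t - z)^2) z := kan_smul n z _ _
    have hmom := kan_moment n hn hz
    have hfinal : kantorovich n (fun t => (1 * G t + (-(G z)) * 1)^2) z ≤ q^2 := by
      rw [hq]
      calc kantorovich n (fun t => (1 * G t + (-(G z)) * 1)^2) z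
          ≤ α^2 * kantorovich n (fun t => (t - z)^2) z := by rw [← hsm]; exact hmono
        _ ≤ α^2 * (1 / (2*((n:ℝ)+1))) := by
            apply mul_le_mul_of_nonneg_left hmom (sq_nonneg α)
        _ = (α * m)^2 := by rw [mul_pow, hm2]
    rw [hiden] at hfinal
    unfold kvar
    nlinarith [sq_nonneg (kantorovich n G z - G z), hfinal]
  -- covariance
  have hCov : kcov n z (fun t => f t - G t) G ≤ p * q := by
    have hcs := kcs n hz hφc hGc
    have hv1 := kvar_nonneg n hz hφc
    have hv2 := kvar_nonneg n hz hGc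
    have h1 : kvar n z (fun t => f t - G t) * kvar n z G ≤ p^2 * q^2 :=
      mul_le_mul hVφ hVG hv2 (sq_nonneg p)
    have h2 : (kcov n z (fun t => f t - G t) G)^2 ≤ (p*q)^2 := by
      calc (kcov n z (fun t => f t - G t) G)^2
          ≤ kvar n z (fun t => f t - G t) * kvar n z G := hcs
        _ ≤ p^2 * q^2 := h1
        _ = (p*q)^2 := by ring
    exact le_of_sq_le_sq h2 (mul_nonneg hp0 hq0)
  -- conclude
  have hpq : p + q ≤ (W + ε) / 2 := by
    have : α * (2*m) + β ≤ W + ε := hsum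
    rw [hp, hq]; linarith
  have hW0 : 0 ≤ W := ot_nonneg hM hτ0 hτ1
  rw [hdec]
  have hsq : (p + q)^2 ≤ ((W + ε) / 2)^2 := by
    have h0 : 0 ≤ p + q := by linarith
    exact pow_le_pow_left₀ h0 hpq 2
  calc kvar n z (fun t => f t - G t) + 2 * kcov n z (fun t => f t - G t) G + kvar n z G
      ≤ p^2 + 2*(p*q) + q^2 := by linarith [hVφ, hVG, hCov]
    _ = (p + q)^2 := by ring
    _ ≤ ((W + ε) / 2)^2 := hsq

end KG

namespace KG

lemma point_bound (n : ℕ) (hn : 1 ≤ n) {z : ℝ} (hz : z ∈ Icc (0:ℝ) 1)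
    {f g : ℝ → ℝ} {Mf Mg : ℝ} (hMf : Bnd f Mf) (hMg : Bnd g Mg)
    (hf : ContinuousOn f (Icc (0:ℝ) 1)) (hg : ContinuousOn g (Icc (0:ℝ) 1)) :
    |kcov n z f g| ≤ 1/4 * omegaTilde f (2 * Real.sqrt (1 / (2 * ((n : ℝ) + 1))))
      * omegaTilde g (2 * Real.sqrt (1 / (2 * ((n : ℝ) + 1)))) := by
  obtain ⟨hτ0, hτ1⟩ := tau_mem n hn
  set Wf := omegaTilde f (2 * Real.sqrt (1 / (2 * ((n : ℝ) + 1)))) with hWf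
  set Wg := omegaTilde g (2 * Real.sqrt (1 / (2 * ((n : ℝ) + 1)))) with hWg
  have hWf0 : 0 ≤ Wf := ot_nonneg hMf hτ0 hτ1
  have hWg0 : 0 ≤ Wg := ot_nonneg hMg hτ0 hτ1
  have key : ∀ ε : ℝ, 0 < ε → |kcov n z f g| ≤ ((Wf+ε)/2) * ((Wg+ε)/2) := by
    intro ε hε
    have hVf := var_le n hn hz hMf hf hε
    have hVg := var_le n hn hz hMg hg hε
    have hcs := kcs n hz hf hg
    have h2 : (kcov n z f g)^2 ≤ (((Wf+ε)/2) * ((Wg+ε)/2))^2 := by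
      calc (kcov n z f g)^2 ≤ kvar n z f * kvar n z g := hcs
        _ ≤ ((Wf+ε)/2)^2 * ((Wg+ε)/2)^2 :=
            mul_le_mul hVf hVg (kvar_nonneg n hz hg) (sq_nonneg _)
        _ = (((Wf+ε)/2) * ((Wg+ε)/2))^2 := by ring
    have hnn : 0 ≤ ((Wf+ε)/2) * ((Wg+ε)/2) := by positivity
    have h3 : |kcov n z f g|^2 ≤ (((Wf+ε)/2) * ((Wg+ε)/2))^2 := by rwa [sq_abs]
    exact le_of_sq_le_sq h3 hnn
  apply le_of_forall_pos_le_add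
  intro δ hδ
  have hden : (0:ℝ) < Wf + Wg + 1 := by linarith
  set ε := min 1 (δ / (Wf + Wg + 1)) with hε
  have hεpos : 0 < ε := lt_min one_pos (by positivity)
  have hε1 : ε ≤ 1 := min_le_left _ _
  have hεδ : ε * (Wf + Wg + 1) ≤ δ := by
    have := min_le_right 1 (δ / (Wf + Wg + 1))
    calc ε * (Wf + Wg + 1) ≤ (δ / (Wf + Wg + 1)) * (Wf + Wg + 1) := by
          apply mul_le_mul_of_nonneg_right this (le_of_lt hden)
      _ = δ := by field_simp
  have hkey := key ε hεpos
  have hkey' : |kcov n z f g| ≤ (Wf*Wg + ε*Wf + ε*Wg + ε^2)/4 := by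
    calc |kcov n z f g| ≤ ((Wf+ε)/2) * ((Wg+ε)/2) := hkey
      _ = (Wf*Wg + ε*Wf + ε*Wg + ε^2)/4 := by ring
  have hsq : ε^2 ≤ ε := by nlinarith [hεpos, hε1]
  have hεδ' : ε*Wf + ε*Wg + ε ≤ δ := by nlinarith [hεδ]
  linarith [hkey', hsq, hεδ', hδ]

end KG

theorem kantorovich_chebyshev_gruss (n : ℕ) (hn : 1 ≤ n)
    (f g : ℝ → ℝ) (hf : ContinuousOn f (Icc (0:ℝ) 1)) (hg : ContinuousOn g (Icc (0:ℝ) 1)) :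
    supNorm (fun x => kantorovich n (fun t => f t * g t) x
        - kantorovich n f x * kantorovich n g x)
      ≤ 1 / 4 * omegaTilde f (2 * Real.sqrt (1 / (2 * ((n : ℝ) + 1))))
          * omegaTilde g (2 * Real.sqrt (1 / (2 * ((n : ℝ) + 1)))) := by
  obtain ⟨Cf, hCf⟩ := isCompact_Icc.exists_bound_of_continuousOn hf
  obtain ⟨Cg, hCg⟩ := isCompact_Icc.exists_bound_of_continuousOn hg
  have hMf : KG.Bnd f (max Cf 0) := by
    refine ⟨le_max_right _ _, fun x hx => ?_⟩
    calc |f x| = ‖f x‖ := (Real.norm_eq_abs _).symm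
      _ ≤ Cf := hCf x hx
      _ ≤ max Cf 0 := le_max_left _ _
  have hMg : KG.Bnd g (max Cg 0) := by
    refine ⟨le_max_right _ _, fun x hx => ?_⟩
    calc |g x| = ‖g x‖ := (Real.norm_eq_abs _).symm
      _ ≤ Cg := hCg x hx
      _ ≤ max Cg 0 := le_max_left _ _
  obtain ⟨hτ0, hτ1⟩ := KG.tau_mem n hn
  have hWf0 := KG.ot_nonneg hMf hτ0 hτ1
  have hWg0 := KG.ot_nonneg hMg hτ0 hτ1
  unfold supNorm
  apply Real.sSup_le
  · rintro y ⟨x, hx, rfl⟩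
    exact KG.point_bound n hn hx hMf hMg hf hg
  · have : (0:ℝ) ≤ 1/4 := by norm_num
    exact mul_nonneg (mul_nonneg this hWf0) hWg0
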